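/- The set of Walrasian prices is a polytope whose vertices have rational coordinates p_j = a_j/b_j with integers a_j, b_j satisfying 1 ≤ b_j ≤ n! · S^n ≤ (Sn)^n, where S = max_j s_j. -/

import Mathlib

open Finset

lemma det_abs_le_aux {n : ℕ} (M : Matrix (Fin n) (Fin n) ℤ) (S : ℕ)
    (h : ∀ i j, |M i j| ≤ (S : ℤ)) : |M.det| ≤ (n.factorial : ℤ) * (S : ℤ) ^ n := by
  rw [Matrix.det_apply]
  calc |∑ σ : Equiv.Perm (Fin n), Equiv.Perm.sign σ • ∏ i, M (σ i) i|
      ≤ ∑ σ : Equiv.Perm (Fin n), |Equiv.Perm.sign σ • ∏ i, M (σ i) i| :=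
        Finset.abs_sum_le_sum_abs _ _
    _ ≤ ∑ _σ : Equiv.Perm (Fin n), (S : ℤ) ^ n := by
        refine Finset.sum_le_sum fun σ _ => ?_
        rw [Units.smul_def, smul_eq_mul, abs_mul]
        have h1 : |((Equiv.Perm.sign σ : ℤˣ) : ℤ)| = 1 := by
          rcases Int.units_eq_one_or (Equiv.Perm.sign σ) with hs | hs <;> rw [hs] <;> norm_num
        rw [h1, one_mul, Finset.abs_prod]
        calc ∏ i, |M (σ i) i| ≤ ∏ _i : Fin n, (S : ℤ) :=
              Finset.prod_le_prod (fun i _ => abs_nonneg _) (fun i _ => h _ _)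
          _ = (S : ℤ) ^ n := by simp
    _ = (n.factorial : ℤ) * (S : ℤ) ^ n := by
        rw [Finset.sum_const, Finset.card_univ, Fintype.card_perm, Fintype.card_fin,
          nsmul_eq_mul]

lemma sum_swap_aux {m n : ℕ} (s : Fin n → ℕ) (q : Fin n → ℝ) (x : Fin m → Fin n → ℕ)
    (hx2 : ∀ j, ∑ i, x i j = s j) :
    ∑ i, ∑ j, q j * (x i j : ℝ) = ∑ j, q j * (s j : ℝ) := by
  rw [Finset.sum_comm]
  refine Finset.sum_congr rfl fun j _ => ?_
  rw [← Finset.mul_sum]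
  congr 1
  rw [← Nat.cast_sum, hx2 j]

lemma support_transfer {m n : ℕ} (s : Fin n → ℕ) (v : Fin m → (Fin n → ℕ) → ℤ)
    (p q : Fin n → ℝ) (x y : Fin m → Fin n → ℕ)
    (hx1 : ∀ i j, x i j ≤ s j) (hx2 : ∀ j, ∑ i, x i j = s j)
    (hy1 : ∀ i j, y i j ≤ s j) (hy2 : ∀ j, ∑ i, y i j = s j)
    (hpx : ∀ i, ∀ z : Fin n → ℕ, (∀ j, z j ≤ s j) →
        (v i z : ℝ) - ∑ j, p j * (z j : ℝ) ≤ (v i (x i) : ℝ) - ∑ j, p j * (x i j : ℝ))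
    (hqy : ∀ i, ∀ z : Fin n → ℕ, (∀ j, z j ≤ s j) →
        (v i z : ℝ) - ∑ j, q j * (z j : ℝ) ≤ (v i (y i) : ℝ) - ∑ j, q j * (y i j : ℝ)) :
    ∀ i, ∀ z : Fin n → ℕ, (∀ j, z j ≤ s j) →
        (v i z : ℝ) - ∑ j, q j * (z j : ℝ) ≤ (v i (x i) : ℝ) - ∑ j, q j * (x i j : ℝ) := by
  set A : Fin m → ℝ := fun i => (v i (x i) : ℝ) - ∑ j, q j * (x i j : ℝ) with hA
  set B : Fin m → ℝ := fun i => (v i (y i) : ℝ) - ∑ j, q j * (y i j : ℝ) with hB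
  have hAB : ∀ i, A i ≤ B i := fun i => hqy i (x i) (hx1 i)
  have hvyx : ∑ i, (v i (y i) : ℝ) ≤ ∑ i, (v i (x i) : ℝ) := by
    have h1 : ∀ i, (v i (y i) : ℝ) - ∑ j, p j * (y i j : ℝ)
        ≤ (v i (x i) : ℝ) - ∑ j, p j * (x i j : ℝ) := fun i => hpx i (y i) (hy1 i)
    have h2 := Finset.sum_le_sum (fun i (_ : i ∈ Finset.univ) => h1 i)
    rw [Finset.sum_sub_distrib, Finset.sum_sub_distrib,
      sum_swap_aux s p x hx2, sum_swap_aux s p y hy2] at h2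
    linarith
  have hsum : ∑ i, B i ≤ ∑ i, A i := by
    rw [hA, hB, Finset.sum_sub_distrib, Finset.sum_sub_distrib,
      sum_swap_aux s q x hx2, sum_swap_aux s q y hy2]
    linarith
  have heq : ∀ i, A i = B i := by
    intro i
    by_contra hne
    have hlt : A i < B i := lt_of_le_of_ne (hAB i) hne
    have : ∑ i, A i < ∑ i, B i :=
      Finset.sum_lt_sum (fun i _ => hAB i) ⟨i, Finset.mem_univ i, hlt⟩
    linarith
  intro i z hz
  calc (v i z : ℝ) - ∑ j, q j * (z j : ℝ) ≤ B i := hqy i z hz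
    _ = A i := (heq i).symm

theorem walrasian_prices_vertices_rational
    (m n : ℕ) (s : Fin n → ℕ) (S : ℕ) (hS : ∀ j, s j ≤ S)
    (v : Fin m → (Fin n → ℕ) → ℤ) :
    let W : Set (Fin n → ℝ) := {p | ∃ x : Fin m → Fin n → ℕ,
      (∀ i j, x i j ≤ s j) ∧ (∀ j, ∑ i, x i j = s j) ∧
      ∀ i, ∀ z : Fin n → ℕ, (∀ j, z j ≤ s j) →
        (v i z : ℝ) - ∑ j, p j * (z j : ℝ) ≤ (v i (x i) : ℝ) - ∑ j, p j * (x i j : ℝ)}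
    Convex ℝ W ∧
    n.factorial * S ^ n ≤ (S * n) ^ n ∧
    ∀ p ∈ W.extremePoints ℝ, ∀ j, ∃ a b : ℤ,
      1 ≤ b ∧ b ≤ (n.factorial : ℤ) * (S : ℤ) ^ n ∧ p j = (a : ℝ) / (b : ℝ) := by
  intro W
  classical
  refine ⟨?_, ?_, ?_⟩
  · -- Convexity
    intro p hp q hq α β hα hβ hαβ
    obtain ⟨x, hx1, hx2, hpx⟩ := hp
    obtain ⟨y, hy1, hy2, hqy⟩ := hq
    have hqx := support_transfer s v p q x y hx1 hx2 hy1 hy2 hpx hqy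
    refine ⟨x, hx1, hx2, fun i z hz => ?_⟩
    have h1 := hpx i z hz
    have h2 := hqx i z hz
    have e1 : ∀ (w : Fin n → ℕ), ∑ j, (α • p + β • q) j * (w j : ℝ)
        = α * ∑ j, p j * (w j : ℝ) + β * ∑ j, q j * (w j : ℝ) := by
      intro w
      rw [Finset.mul_sum, Finset.mul_sum, ← Finset.sum_add_distrib]
      refine Finset.sum_congr rfl fun j _ => ?_
      simp only [Pi.add_apply, Pi.smul_apply, smul_eq_mul]
      ring
    rw [e1, e1]
    have H1 : α * ((v i z : ℝ) - ∑ j, p j * (z j : ℝ))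
        ≤ α * ((v i (x i) : ℝ) - ∑ j, p j * (x i j : ℝ)) := mul_le_mul_of_nonneg_left h1 hα
    have H2 : β * ((v i z : ℝ) - ∑ j, q j * (z j : ℝ))
        ≤ β * ((v i (x i) : ℝ) - ∑ j, q j * (x i j : ℝ)) := mul_le_mul_of_nonneg_left h2 hβ
    have e2 : α * (v i z : ℝ) + β * (v i z : ℝ) = (v i z : ℝ) := by
      rw [← add_mul, hαβ, one_mul]
    have e3 : α * (v i (x i) : ℝ) + β * (v i (x i) : ℝ) = (v i (x i) : ℝ) := by
      rw [← add_mul, hαβ, one_mul]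
    nlinarith [H1, H2, e2, e3]
  · -- numeric bound
    calc n.factorial * S ^ n ≤ n ^ n * S ^ n :=
          Nat.mul_le_mul_right _ (Nat.factorial_le_pow n)
      _ = (S * n) ^ n := by rw [mul_comm (n ^ n), ← Nat.mul_pow]
  · -- extreme points
    rintro p ⟨hpW, hpext⟩ j0
    obtain ⟨x, hx1, hx2, hpx⟩ := hpW
    set ZT := (∀ j : Fin n, Fin (s j + 1)) with hZT
    set zz : ZT → Fin n → ℕ := fun zf j => (zf j : ℕ) with hzzdef
    have hzz : ∀ zf : ZT, ∀ j, zz zf j ≤ s j := fun zf j => Nat.lt_succ_iff.mp (zf j).is_lt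
    set ι := Fin m × ZT with hι
    set row : ι → Fin n → ℤ := fun k j => (zz k.2 j : ℤ) - (x k.1 j : ℤ) with hrow
    set c : ι → ℤ := fun k => v k.1 (zz k.2) - v k.1 (x k.1) with hc
    have equivform : ∀ (q : Fin n → ℝ) (k : ι),
        ((v k.1 (zz k.2) : ℝ) - ∑ j, q j * (zz k.2 j : ℝ)
          ≤ (v k.1 (x k.1) : ℝ) - ∑ j, q j * (x k.1 j : ℝ)) ↔
        ((c k : ℝ) ≤ ∑ j, (row k j : ℝ) * q j) := by
      intro q k
      have h2 : ∑ j, (row k j : ℝ) * q j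
          = (∑ j, q j * (zz k.2 j : ℝ)) - ∑ j, q j * (x k.1 j : ℝ) := by
        rw [← Finset.sum_sub_distrib]
        refine Finset.sum_congr rfl fun j _ => ?_
        rw [hrow]
        push_cast
        ring
      have h3 : (c k : ℝ) = (v k.1 (zz k.2) : ℝ) - (v k.1 (x k.1) : ℝ) := by
        rw [hc]; push_cast; ring
      rw [h2, h3]
      constructor <;> intro h <;> linarith
    have hcon : ∀ k : ι, (c k : ℝ) ≤ ∑ j, (row k j : ℝ) * p j :=
      fun k => (equivform p k).mp (hpx k.1 (zz k.2) (hzz k.2))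
    have hmemW : ∀ q : Fin n → ℝ,
        (∀ k : ι, (c k : ℝ) ≤ ∑ j, (row k j : ℝ) * q j) → q ∈ W := by
      intro q hq
      refine ⟨x, hx1, hx2, fun i z hz => ?_⟩
      exact (equivform q (i, fun j => ⟨z j, Nat.lt_succ_of_le (hz j)⟩)).mpr
        (hq (i, fun j => ⟨z j, Nat.lt_succ_of_le (hz j)⟩))
    set tight : ι → Prop := fun k => (c k : ℝ) = ∑ j, (row k j : ℝ) * p j with htight
    set rowR : ι → EuclideanSpace ℝ (Fin n) := fun k => WithLp.toLp 2 (fun j => (row k j : ℝ)) with hrowR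
    set K : Submodule ℝ (EuclideanSpace ℝ (Fin n)) :=
      Submodule.span ℝ (rowR '' {k | tight k}) with hKdef
    have hK : K = ⊤ := by
      by_contra hne
      have hbot : Kᗮ ≠ ⊥ := fun h => hne (Submodule.orthogonal_eq_bot_iff.mp h)
      obtain ⟨d, hdK, hd0⟩ := (Submodule.ne_bot_iff _).mp hbot
      have hinner : ∀ u w : EuclideanSpace ℝ (Fin n), (inner ℝ u w : ℝ) = ∑ j, u j * w j := by
        intro u w
        simp [PiLp.inner_apply, RCLike.inner_apply, conj_trivial]
        exact Finset.sum_congr rfl fun j _ => mul_comm _ _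
      have hdot0 : ∀ k, tight k → ∑ j, (row k j : ℝ) * d j = 0 := by
        intro k hk
        have hmem : rowR k ∈ K := Submodule.subset_span ⟨k, hk, rfl⟩
        have h := (Submodule.mem_orthogonal K d).mp hdK (rowR k) hmem
        rw [hinner] at h
        exact h
      set dot : ι → ℝ := fun k => ∑ j, (row k j : ℝ) * d j with hdotdef
      have slack_pos : ∀ k, dot k ≠ 0 → 0 < (∑ j, (row k j : ℝ) * p j) - c k := by
        intro k hk
        rcases lt_or_eq_of_le (hcon k) with h | h
        · linarith
        · exact absurd (hdot0 k h) hk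
      obtain ⟨ε, hε0, hεle⟩ : ∃ ε > 0, ∀ k, dot k ≠ 0 →
          ε * |dot k| ≤ (∑ j, (row k j : ℝ) * p j) - c k := by
        by_cases hne2 : (Finset.univ.filter fun k : ι => dot k ≠ 0).Nonempty
        · refine ⟨(Finset.univ.filter fun k : ι => dot k ≠ 0).inf' hne2
            (fun k => ((∑ j, (row k j : ℝ) * p j) - c k) / |dot k|), ?_, ?_⟩
          · rw [gt_iff_lt, Finset.lt_inf'_iff]
            intro k hk
            have hk' : dot k ≠ 0 := by simpa using hk
            exact div_pos (slack_pos k hk') (abs_pos.mpr hk')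
          · intro k hk
            have habs : (0 : ℝ) < |dot k| := abs_pos.mpr hk
            have h1 := Finset.inf'_le
              (f := fun k => ((∑ j, (row k j : ℝ) * p j) - c k) / |dot k|)
              (by simp [hk] : k ∈ Finset.univ.filter fun k : ι => dot k ≠ 0)
            calc _ ≤ (((∑ j, (row k j : ℝ) * p j) - c k) / |dot k|) * |dot k| :=
                  mul_le_mul_of_nonneg_right h1 habs.le
              _ = (∑ j, (row k j : ℝ) * p j) - c k := div_mul_cancel₀ _ (ne_of_gt habs)
        · refine ⟨1, one_pos, fun k hk => absurd ⟨k, by simp [hk]⟩ hne2⟩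
      have hW' : ∀ t : ℝ, |t| ≤ ε → (fun j => p j + t * d j) ∈ W := by
        intro t ht
        apply hmemW
        intro k
        have hsplit : ∑ j, (row k j : ℝ) * (p j + t * d j)
            = (∑ j, (row k j : ℝ) * p j) + t * dot k := by
          rw [hdotdef, Finset.mul_sum, ← Finset.sum_add_distrib]
          exact Finset.sum_congr rfl fun j _ => by ring
        rw [hsplit]
        by_cases hdk : dot k = 0
        · rw [hdk]
          simpa using hcon k
        · have h1 := hεle k hdk
          have h2 : |t * dot k| ≤ ε * |dot k| := by
            rw [abs_mul]
            exact mul_le_mul_of_nonneg_right ht (abs_nonneg _)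
          have h3 := (abs_le.mp h2).1
          linarith
      have hq1 := hW' ε (by rw [abs_of_pos hε0])
      have hq2 := hW' (-ε) (by rw [abs_neg, abs_of_pos hε0])
      have hseg : p ∈ openSegment ℝ (fun j => p j + (-ε) * d j) (fun j => p j + ε * d j) := by
        refine ⟨1/2, 1/2, by norm_num, by norm_num, by norm_num, ?_⟩
        funext j
        simp only [Pi.add_apply, Pi.smul_apply, smul_eq_mul]
        ring
      have h2 := hpext hq1 hq2 (by rwa [openSegment_symm])
      have hex : ∃ j1, d j1 ≠ 0 := by
        by_contra hcontra
        push_neg at hcontra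
        exact hd0 (by ext j; simpa using hcontra j)
      obtain ⟨j1, hj1⟩ := hex
      have := congrFun h2 j1
      have : ε * d j1 = 0 := by linarith [congrFun h2 j1, le_refl (p j1)]
      rcases mul_eq_zero.mp this with h | h
      · exact absurd h (ne_of_gt hε0)
      · exact hj1 h
    -- extract a basis from the tight rows
    obtain ⟨t, hts, htspan, htli⟩ := exists_linearIndependent ℝ (rowR '' {k | tight k})
    have htop : ⊤ ≤ Submodule.span ℝ
        (Set.range (Subtype.val : t → EuclideanSpace ℝ (Fin n))) := by
      rw [Subtype.range_coe, htspan]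
      exact (hKdef ▸ hK : Submodule.span ℝ (rowR '' {k | tight k}) = ⊤).ge
    let bas : Module.Basis t ℝ (EuclideanSpace ℝ (Fin n)) := Module.Basis.mk htli htop
    have hfin : t.Finite := htli.setFinite
    haveI : Fintype t := hfin.fintype
    have hcard : Fintype.card t = n := by
      have h1 := Module.finrank_eq_card_basis bas
      rw [finrank_euclideanSpace_fin] at h1
      exact h1.symm
    let e : Fin n ≃ t := (Fintype.equivFinOfCardEq hcard).symm
    have hpick : ∀ j : Fin n, ∃ k : ι, tight k ∧ rowR k = ((e j : t) : EuclideanSpace ℝ (Fin n)) := by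
      intro j
      obtain ⟨k, hk1, hk2⟩ := hts (e j).2
      exact ⟨k, hk1, hk2⟩
    choose kk hkt hkr using hpick
    set M : Matrix (Fin n) (Fin n) ℤ := Matrix.of fun j j' => row (kk j) j' with hM
    set Mr : Matrix (Fin n) (Fin n) ℝ := M.map (Int.cast) with hMr
    have hdeteq : Mr.det = (M.det : ℝ) := by
      rw [show Mr = (Int.castRingHom ℝ).mapMatrix M from rfl, ← RingHom.map_det]
      rfl
    have hdetMr : Mr.det ≠ 0 := by
      have hunit : IsUnit (((EuclideanSpace.basisFun (Fin n) ℝ).toBasis).det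
          ⇑(bas.reindex e.symm)) := Module.Basis.isUnit_det _ _
      have hwj : ∀ j, (bas.reindex e.symm) j = rowR (kk j) := by
        intro j
        rw [Module.Basis.reindex_apply, Equiv.symm_symm]
        rw [show bas (e j) = ((e j : t) : EuclideanSpace ℝ (Fin n)) from Module.Basis.mk_apply htli htop (e j)]
        exact (hkr j).symm
      have hdet : ((EuclideanSpace.basisFun (Fin n) ℝ).toBasis).det ⇑(bas.reindex e.symm)
          = Mr.transpose.det := by
        rw [Module.Basis.det_apply]
        congr 1
        ext i j
        rw [Module.Basis.toMatrix_apply, hwj j]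
        simp only [OrthonormalBasis.coe_toBasis_repr_apply, EuclideanSpace.basisFun_repr]
        rfl
      rw [Matrix.det_transpose] at hdet
      rw [← hdet]
      exact hunit.ne_zero
    have hMp : Mr.mulVec p = fun j => (c (kk j) : ℝ) := by
      funext j
      have ht := hkt j
      show ∑ j', Mr j j' * p j' = (c (kk j) : ℝ)
      rw [htight] at ht
      exact ht.symm
    have hcramer : (M.det : ℝ) • p = Mr.adjugate.mulVec (fun j => (c (kk j) : ℝ)) := by
      rw [← hMp, Matrix.mulVec_mulVec, Matrix.adjugate_mul, hdeteq,
        Matrix.smul_mulVec, Matrix.one_mulVec]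
    set a : ℤ := M.adjugate.mulVec (fun j => c (kk j)) j0 with ha
    set b : ℤ := M.det with hb
    have hab : (b : ℝ) * p j0 = (a : ℝ) := by
      have h1 := congrFun hcramer j0
      have h2 : Mr.adjugate.mulVec (fun j => (c (kk j) : ℝ)) j0 = (a : ℝ) := by
        rw [ha, show Mr.adjugate = (M.adjugate).map (Int.cast)
          from ((RingHom.map_adjugate (Int.castRingHom ℝ) M)).symm]
        simp only [Matrix.mulVec, dotProduct, Matrix.map_apply]
        push_cast
        rfl
      rw [h2] at h1
      simpa using h1
    have hb0 : b ≠ 0 := by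
      intro h
      apply hdetMr
      rw [hdeteq, h, Int.cast_zero]
    have hentry : ∀ j j', |M j j'| ≤ (S : ℤ) := by
      intro j j'
      have h2 : ((zz (kk j).2 j') : ℤ) ≤ S := by
        exact_mod_cast (hzz _ j').trans (hS j')
      have h4 : ((x (kk j).1 j') : ℤ) ≤ S := by
        exact_mod_cast (hx1 _ j').trans (hS j')
      have h1 : (0 : ℤ) ≤ (zz (kk j).2 j' : ℤ) := Int.ofNat_nonneg _
      have h3 : (0 : ℤ) ≤ (x (kk j).1 j' : ℤ) := Int.ofNat_nonneg _
      show |(zz (kk j).2 j' : ℤ) - (x (kk j).1 j' : ℤ)| ≤ (S : ℤ)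
      rw [abs_le]
      constructor <;> linarith
    have hdetb : |b| ≤ (n.factorial : ℤ) * (S : ℤ) ^ n := det_abs_le_aux M S hentry
    have hfrac : p j0 = (a : ℝ) / (b : ℝ) := by
      rw [eq_div_iff (by exact_mod_cast hb0 : (b : ℝ) ≠ 0)]
      linarith [hab]
    rcases lt_or_gt_of_ne hb0 with hneg | hpos
    · refine ⟨-a, -b, by omega, ?_, ?_⟩
      · rw [abs_of_neg hneg] at hdetb
        exact hdetb
      · rw [hfrac, Int.cast_neg, Int.cast_neg, neg_div_neg_eq]
    · refine ⟨a, b, hpos, ?_, hfrac⟩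
      rw [abs_of_pos hpos] at hdetb
      exact hdetb
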